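/- For vectors w_k in ℂ^B defined by w_k[b] = exp(2πi k s_b / N), b = 1,...,B, where s_1,...,s_B are chosen independently and uniformly at random from {0,...,N-1}, with probability at least 1 - 1/5 over the choice of shifts, for all distinct k, k' ∈ {0,...,N-1}: |w_k^† w_{k'}| / B ≤ 2√(log(5N)/B). -/

import Mathlib

open MeasureTheory ProbabilityTheory Real Complex

lemma aux_exp_sum_zero (N m : ℕ) (hm1 : 1 ≤ m) (hm : m < N) :
    ∑ v ∈ Finset.range N, Complex.exp (2 * Real.pi * Complex.I * m * v / N) = 0 := by
  have hNpos : 0 < N := lt_of_le_of_lt (Nat.zero_le m) hm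
  have hN0 : (N : ℂ) ≠ 0 := by exact_mod_cast hNpos.ne'
  set ζ : ℂ := Complex.exp (2 * Real.pi * Complex.I * m / N) with hζ
  have hterm : ∀ v : ℕ, Complex.exp (2 * Real.pi * Complex.I * m * v / N) = ζ ^ v := by
    intro v
    rw [hζ, ← Complex.exp_nat_mul]
    ring_nf
  have hζN : ζ ^ N = 1 := by
    rw [hζ, ← Complex.exp_nat_mul]
    have : (N : ℂ) * (2 * Real.pi * Complex.I * m / N) = m * (2 * Real.pi * Complex.I) := by
      field_simp
    rw [this]
    exact_mod_cast Complex.exp_nat_mul_two_pi_mul_I m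
  have hζ1 : ζ ≠ 1 := by
    intro h
    rw [hζ, Complex.exp_eq_one_iff] at h
    obtain ⟨n, hn⟩ := h
    have hπ : (2 * Real.pi * Complex.I : ℂ) ≠ 0 := by
      simp [Complex.I_ne_zero, Real.pi_ne_zero, Complex.ofReal_ne_zero]
    have hmc : (m : ℂ) = ((n * N : ℤ) : ℂ) := by
      have h2 : (2 * Real.pi * Complex.I) * (m : ℂ) = (2 * Real.pi * Complex.I) * ((n * N : ℤ) : ℂ) := by
        push_cast
        field_simp at hn
        linear_combination (2 * Real.pi * Complex.I) * hn
      exact mul_left_cancel₀ hπ h2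
    have hmz : (m : ℤ) = n * N := by exact_mod_cast hmc
    have hdvd : (N : ℤ) ∣ (m : ℤ) := ⟨n, by linarith [hmz]⟩
    have : N ∣ m := by exact_mod_cast hdvd
    have := Nat.le_of_dvd (by omega) this
    omega
  simp_rw [hterm]
  rw [geom_sum_eq hζ1, hζN, sub_self, zero_div]

lemma aux_cos_sum_zero (N m : ℕ) (θ : ℝ) (hm1 : 1 ≤ m) (hm : m < N) :
    ∑ v ∈ Finset.range N, Real.cos (2 * Real.pi * m * v / N - θ) = 0 := by
  have hterm : ∀ v : ℕ, Real.cos (2 * Real.pi * m * v / N - θ)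
      = (Complex.exp (-(θ:ℂ) * Complex.I) * Complex.exp (2 * Real.pi * Complex.I * m * v / N)).re := by
    intro v
    rw [← Complex.exp_add]
    rw [show (-(θ:ℂ) * Complex.I + 2 * Real.pi * Complex.I * m * v / N)
        = ((2 * Real.pi * m * v / N - θ : ℝ) : ℂ) * Complex.I by push_cast; ring]
    rw [Complex.exp_ofReal_mul_I_re]
  simp_rw [hterm]
  rw [← Complex.re_sum, ← Finset.mul_sum, aux_exp_sum_zero N m hm1 hm, mul_zero, Complex.zero_re]

lemma aux_convex (t x : ℝ) (hx : |x| ≤ 1) :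
    Real.exp (t * x) ≤ Real.cosh t + x * Real.sinh t := by
  have hx1 : -1 ≤ x := (abs_le.mp hx).1
  have hx2 : x ≤ 1 := (abs_le.mp hx).2
  have ha : (0:ℝ) ≤ (1 - x)/2 := by linarith
  have hb : (0:ℝ) ≤ (1 + x)/2 := by linarith
  have hab : (1 - x)/2 + (1 + x)/2 = 1 := by ring
  have := convexOn_exp.2 (Set.mem_univ (-t)) (Set.mem_univ t) ha hb hab
  simp only [smul_eq_mul] at this
  calc Real.exp (t * x) = Real.exp ((1-x)/2 * (-t) + (1+x)/2 * t) := by ring_nf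
    _ ≤ (1-x)/2 * Real.exp (-t) + (1+x)/2 * Real.exp t := this
    _ = Real.cosh t + x * Real.sinh t := by rw [Real.cosh_eq, Real.sinh_eq]; ring

lemma aux_cos12_sq : (9:ℝ)/10 ≤ Real.cos (Real.pi/12) ^ 2 := by
  have h : Real.cos (Real.pi/12) ^ 2 = 1/2 + Real.cos (Real.pi/6) / 2 := by
    rw [Real.cos_sq, show 2*(Real.pi/12) = Real.pi/6 by ring]
  rw [h, Real.cos_pi_div_six]
  have : (1.6:ℝ) ≤ Real.sqrt 3 := by
    rw [show (1.6:ℝ) = Real.sqrt (1.6^2) by rw [Real.sqrt_sq]; norm_num]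
    exact Real.sqrt_le_sqrt (by norm_num)
  linarith

lemma aux_cos12_pos : 0 < Real.cos (Real.pi/12) := by
  apply Real.cos_pos_of_mem_Ioo
  constructor <;> nlinarith [Real.pi_pos]

lemma aux_cover (z : ℂ) : ∃ j : ℕ, j < 12 ∧
    ‖z‖ * Real.cos (Real.pi/12) ≤ (Complex.exp (-(Real.pi*j/6 : ℝ) * Complex.I) * z).re := by
  set φ := Complex.arg z with hφ
  set r : ℤ := round (φ * 6 / Real.pi) with hr
  have hπ : (0:ℝ) < Real.pi := Real.pi_pos
  have hclose : |φ - r * Real.pi / 6| ≤ Real.pi / 12 := by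
    have h1 : |φ * 6 / Real.pi - r| ≤ 1/2 := abs_sub_round _
    have : |φ - r * Real.pi / 6| = |φ * 6 / Real.pi - r| * (Real.pi / 6) := by
      rw [← abs_of_pos (show (0:ℝ) < Real.pi/6 by linarith), ← abs_mul]
      congr 1
      field_simp
    rw [this]
    calc |φ * 6 / Real.pi - r| * (Real.pi / 6) ≤ 1/2 * (Real.pi/6) := by
          apply mul_le_mul_of_nonneg_right h1; linarith
      _ = Real.pi / 12 := by ring
  have key : ∀ t : ℝ, (Complex.exp (-(t:ℂ) * Complex.I) * z).re = ‖z‖ * Real.cos (φ - t) := by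
    intro t
    conv_lhs => rw [← Complex.norm_mul_exp_arg_mul_I z]
    have h2 : Complex.exp (-(t:ℂ) * Complex.I) * Complex.exp ((φ:ℂ) * Complex.I)
        = Complex.exp (((φ - t : ℝ):ℂ) * Complex.I) := by
      rw [← Complex.exp_add]; congr 1; push_cast; ring
    rw [mul_left_comm, h2, Complex.re_ofReal_mul, Complex.exp_ofReal_mul_I_re]
  refine ⟨(r % 12).toNat, ?_, ?_⟩
  · have h0 : 0 ≤ r % 12 := Int.emod_nonneg r (by norm_num)
    have h12 : r % 12 < 12 := Int.emod_lt_of_pos r (by norm_num)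
    omega
  · have h0 : 0 ≤ r % 12 := Int.emod_nonneg r (by norm_num)
    have hjz : (((r % 12).toNat : ℤ)) = r - 12 * (r / 12) := by omega
    have hjr : (((r % 12).toNat : ℕ) : ℝ) = (r : ℝ) - 12 * ((r / 12 : ℤ) : ℝ) := by
      exact_mod_cast congrArg (fun x : ℤ => (x : ℝ)) hjz
    have hexp : Complex.exp (-(Real.pi * ((r % 12).toNat : ℝ)/6 : ℝ) * Complex.I)
        = Complex.exp (-(Real.pi * (r:ℝ)/6 : ℝ) * Complex.I) := by
      rw [Complex.exp_eq_exp_iff_exists_int]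
      refine ⟨(r / 12 : ℤ), ?_⟩
      rw [show ((-(Real.pi * ((r % 12).toNat : ℝ)/6 : ℝ)) : ℂ) = -(Real.pi * (((r % 12).toNat : ℕ) : ℝ) : ℝ)/6 by push_cast; ring]
      push_cast [hjr]
      ring
    rw [hexp, key]
    have hcos : Real.cos (Real.pi/12) ≤ Real.cos (φ - Real.pi * r / 6) := by
      rw [← Real.cos_abs (φ - Real.pi * r / 6)]
      apply Real.cos_le_cos_of_nonneg_of_le_pi (abs_nonneg _)
      · linarith
      · rw [show Real.pi * r / 6 = r * Real.pi / 6 by ring]; linarith [hclose, abs_nonneg (φ - r * Real.pi / 6)]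
    exact mul_le_mul_of_nonneg_left hcos (norm_nonneg z)

lemma aux_mean {Ω : Type*} [MeasurableSpace Ω] (μ : Measure Ω) [IsProbabilityMeasure μ]
    (N : ℕ) (hN : 0 < N) (f : Ω → ℕ) (hf : Measurable f) (hfr : ∀ ω, f ω < N)
    (hu : ∀ v, v < N → μ {ω | f ω = v} = (N : ENNReal)⁻¹) (g : ℕ → ℝ) :
    ∫ ω, g (f ω) ∂μ = (N : ℝ)⁻¹ * ∑ v ∈ Finset.range N, g v := by
  have hms : ∀ v : ℕ, MeasurableSet {ω | f ω = v} := fun v => hf (measurableSet_singleton v)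
  have hpt : ∀ ω, g (f ω) = ∑ v ∈ Finset.range N,
      Set.indicator {ω' | f ω' = v} (fun _ => g v) ω := by
    intro ω
    rw [Finset.sum_eq_single (f ω)]
    · rw [Set.indicator_of_mem (by simp : ω ∈ {ω' | f ω' = f ω})]
    · intro v _ hv
      exact Set.indicator_of_notMem (fun h => hv (Eq.symm h)) _
    · intro h; exact absurd (Finset.mem_range.mpr (hfr ω)) h
  rw [integral_congr_ae (Filter.Eventually.of_forall hpt)]
  rw [integral_finset_sum _ (fun v _ => (integrable_const (g v)).indicator (hms v))]
  have : ∀ v ∈ Finset.range N, ∫ ω, Set.indicator {ω' | f ω' = v} (fun _ => g v) ω ∂μ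
      = (N : ℝ)⁻¹ * g v := by
    intro v hv
    rw [integral_indicator_const (g v) (hms v), measureReal_def, hu v (Finset.mem_range.mp hv)]
    rw [smul_eq_mul]
    congr 1
    rw [ENNReal.toReal_inv]; simp
  rw [Finset.sum_congr rfl this, ← Finset.mul_sum]

lemma aux_reduce (N k k' m : ℕ) (hk : k < N) (hk' : k' < N)
    (hgen : (k' + N - k) % N = m) (v : ℕ) :
    (starRingEnd ℂ) (Complex.exp (2 * Real.pi * Complex.I * k * v / N)) *
      Complex.exp (2 * Real.pi * Complex.I * k' * v / N)
      = Complex.exp (2 * Real.pi * Complex.I * (m : ℂ) * v / N) := by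
  have hN : 0 < N := lt_of_le_of_lt (Nat.zero_le k) hk
  have hNC : (N : ℂ) ≠ 0 := by exact_mod_cast hN.ne'
  rw [← Complex.exp_conj, ← Complex.exp_add, Complex.exp_eq_exp_iff_exists_int]
  obtain ⟨q, hkey⟩ : ∃ q, k' + N = N * q + m + k :=
    ⟨(k' + N - k) / N, by have := Nat.div_add_mod (k' + N - k) N; omega⟩
  have hkeyC : (k' : ℂ) + N = N * q + m + k := by exact_mod_cast hkey
  refine ⟨(v : ℤ) * (q - 1), ?_⟩
  have hconj : (starRingEnd ℂ) (2 * Real.pi * Complex.I * k * v / N)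
      = -(2 * Real.pi * Complex.I * k * v / N) := by
    simp [map_div₀, map_mul, Complex.conj_I, map_ofNat]
    ring
  rw [hconj]
  field_simp
  push_cast
  linear_combination (v:ℂ) * hkeyC

lemma aux_numeric (N : ℕ) (hN : 0 < N) :
    12 * ((N - 1 : ℕ) : ℝ) * ((5 * N : ℝ)) ^ (-(9/5 : ℝ)) ≤ 1/5 := by
  have hb : (0:ℝ) < 5 * N := by positivity
  rcases Nat.lt_or_ge N 2 with h2 | h2
  · interval_cases N
    norm_num
  · have hnat : (60 * (N - 1))^5 ≤ (5 * N)^9 := by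
      rcases Nat.lt_or_ge N 5 with h5 | h5
      · interval_cases N <;> norm_num
      · calc (60 * (N - 1))^5 ≤ (60 * N)^5 := Nat.pow_le_pow_left (by omega) 5
          _ = 60^5 * N^5 := by rw [mul_pow]
          _ ≤ (5^9 * N^4) * N^5 := by
              have h4 : 625 ≤ N^4 := by
                calc 625 = 5^4 := by norm_num
                  _ ≤ N^4 := Nat.pow_le_pow_left h5 4
              have : 60^5 ≤ 5^9 * N^4 := by nlinarith
              exact Nat.mul_le_mul_right _ this
          _ = (5 * N)^9 := by ring
    have hR : (60 * ((N-1:ℕ):ℝ)) ≤ (5*N:ℝ) ^ ((9:ℝ)/5) := by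
      have h1 : (60 * ((N-1:ℕ):ℝ)) = ((60 * ((N-1:ℕ):ℝ))^(5:ℕ)) ^ ((1:ℝ)/5) := by
        rw [← Real.rpow_natCast (60 * ((N-1:ℕ):ℝ)) 5, ← Real.rpow_mul (by positivity)]
        norm_num
      have h2' : (5*N:ℝ) ^ ((9:ℝ)/5) = ((5*N:ℝ)^(9:ℕ)) ^ ((1:ℝ)/5) := by
        rw [← Real.rpow_natCast (5*N:ℝ) 9, ← Real.rpow_mul hb.le]
        norm_num
      rw [h1, h2']
      apply Real.rpow_le_rpow (by positivity) _ (by norm_num)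
      exact_mod_cast hnat
    rw [Real.rpow_neg hb.le, ← div_eq_mul_inv, div_le_iff₀ (by positivity)]
    nlinarith [hR]

lemma aux_hoeffding {Ω : Type*} [MeasurableSpace Ω] (μ : Measure Ω) [IsProbabilityMeasure μ]
    (B : ℕ) (hB : 0 < B) (X : Fin B → Ω → ℝ)
    (hXmeas : ∀ b, Measurable (X b))
    (hXbdd : ∀ b ω, |X b ω| ≤ 1)
    (hXmean : ∀ b, ∫ ω, X b ω ∂μ = 0)
    (hXindep : iIndepFun X μ)
    (u : ℝ) (hu : 0 ≤ u) :
    μ {ω | u ≤ ∑ b, X b ω} ≤ ENNReal.ofReal (Real.exp (-u^2/(2*B))) := by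
  set t : ℝ := u / B with ht
  have htnn : 0 ≤ t := div_nonneg hu (Nat.cast_nonneg B)
  have hBR : (0:ℝ) < B := by exact_mod_cast hB
  -- integrability of exp (t * X b)
  have hint : ∀ b, Integrable (fun ω => Real.exp (t * X b ω)) μ := by
    intro b
    apply Integrable.mono' (integrable_const (Real.exp |t|))
    · exact (((hXmeas b).const_mul t).exp).aestronglyMeasurable
    · filter_upwards with ω
      rw [Real.norm_eq_abs, Real.abs_exp, Real.exp_le_exp]
      calc t * X b ω ≤ |t * X b ω| := le_abs_self _
        _ = |t| * |X b ω| := abs_mul _ _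
        _ ≤ |t| * 1 := by gcongr; exact hXbdd b ω
        _ = |t| := mul_one _
  -- mgf bound per coordinate
  have hmgf : ∀ b, mgf (X b) μ t ≤ Real.cosh t := by
    intro b
    have hXint : Integrable (X b) μ := by
      apply Integrable.mono' (integrable_const 1)
      · exact (hXmeas b).aestronglyMeasurable
      · filter_upwards with ω; rw [Real.norm_eq_abs]; exact hXbdd b ω
    have h1 : mgf (X b) μ t ≤ ∫ ω, (Real.cosh t + X b ω * Real.sinh t) ∂μ := by
      apply integral_mono (hint b)
      · exact (integrable_const _).add (hXint.mul_const _)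
      · intro ω; exact aux_convex t (X b ω) (hXbdd b ω)
    calc mgf (X b) μ t ≤ ∫ ω, (Real.cosh t + X b ω * Real.sinh t) ∂μ := h1
      _ = Real.cosh t + (∫ ω, X b ω ∂μ) * Real.sinh t := by
          rw [integral_add (integrable_const _) (hXint.mul_const _), integral_const,
            integral_mul_const, probReal_univ, smul_eq_mul, one_mul]
      _ = Real.cosh t := by rw [hXmean b, zero_mul, add_zero]
  -- Chernoff
  have hSint : Integrable (fun ω => Real.exp (t * (∑ b, X b) ω)) μ := by
    apply Integrable.mono' (integrable_const (Real.exp (|t| * B)))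
    · refine (Measurable.exp ?_).aestronglyMeasurable
      simp only [Finset.sum_apply]
      exact (Finset.measurable_sum Finset.univ fun b _ => hXmeas b).const_mul t
    · filter_upwards with ω
      rw [Real.norm_eq_abs, Real.abs_exp, Real.exp_le_exp]
      calc t * (∑ b, X b) ω ≤ |t * (∑ b, X b) ω| := le_abs_self _
        _ = |t| * |∑ b, X b ω| := by rw [abs_mul]; simp
        _ ≤ |t| * (∑ b : Fin B, |X b ω|) := by gcongr; exact Finset.abs_sum_le_sum_abs _ _
        _ ≤ |t| * (∑ _b : Fin B, (1:ℝ)) := by gcongr with b; exact hXbdd b ω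
        _ = |t| * B := by simp
  have hchern := measure_ge_le_exp_mul_mgf (μ := μ) (X := ∑ b, X b) u htnn hSint
  have hmgfsum : mgf (∑ b, X b) μ t ≤ Real.cosh t ^ B := by
    have := hXindep.mgf_sum (t := t) hXmeas Finset.univ
    rw [this]
    calc ∏ b : Fin B, mgf (X b) μ t ≤ ∏ _b : Fin B, Real.cosh t := by
          apply Finset.prod_le_prod (fun b _ => mgf_nonneg) (fun b _ => hmgf b)
      _ = Real.cosh t ^ B := by simp
  have hcosh : Real.cosh t ^ B ≤ Real.exp (t^2/2) ^ B := by
    exact pow_le_pow_left₀ (Real.cosh_pos (x := t)).le (Real.cosh_le_exp_half_sq t) B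
  have hfinal : Real.exp (-t * u) * mgf (∑ b, X b) μ t ≤ Real.exp (-u^2/(2*B)) := by
    calc Real.exp (-t * u) * mgf (∑ b, X b) μ t
        ≤ Real.exp (-t * u) * Real.exp (t^2/2) ^ B := by
          apply mul_le_mul_of_nonneg_left (hmgfsum.trans hcosh) (Real.exp_nonneg _)
      _ = Real.exp (-t * u + B * (t^2/2)) := by
          rw [← Real.exp_nat_mul, ← Real.exp_add]
      _ = Real.exp (-u^2/(2*B)) := by
          congr 1
          rw [ht]
          field_simp
          ring
  have hset : {ω | u ≤ ∑ b, X b ω} = {ω | u ≤ (∑ b, X b) ω} := by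
    ext ω; simp
  rw [hset, ← ENNReal.ofReal_toReal (measure_ne_top μ _)]
  exact ENNReal.ofReal_le_ofReal (hchern.trans hfinal)

lemma aux_meas_comp {Ω : Type*} [MeasurableSpace Ω] (f : Ω → ℕ) (hf : Measurable f)
    (g : ℕ → ℝ) : Measurable (fun ω => g (f ω)) :=
  Measurable.comp (f := f) (g := g) measurable_from_top hf

lemma aux_re_term (θ : ℝ) (N m v : ℕ) :
    (Complex.exp (-(θ:ℂ) * Complex.I)
      * Complex.exp (2 * Real.pi * Complex.I * (m:ℂ) * (v:ℂ) / (N:ℂ))).re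
      = Real.cos (2 * Real.pi * (m:ℝ) * (v:ℝ) / (N:ℝ) - θ) := by
  rw [← Complex.exp_add,
    show (-(θ:ℂ) * Complex.I + 2 * Real.pi * Complex.I * (m:ℂ) * (v:ℂ) / (N:ℂ))
      = ((2 * Real.pi * (m:ℝ) * (v:ℝ) / (N:ℝ) - θ : ℝ) : ℂ) * Complex.I by push_cast; ring,
    Complex.exp_ofReal_mul_I_re]

/-- Mutual incoherence bound for the randomly sub-sampled IDFT sensing matrix:
with probability at least `1 - 1/5` over uniformly random shifts
`s 1, …, s B ∈ {0, …, N-1}`, all normalized inner products between distinct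
columns `w k` (with `w k b = exp (2πi k s_b / N)`) are at most
`2 √(log (5N) / B)`. -/
theorem mutual_incoherence_bound
    {Ω : Type*} [MeasurableSpace Ω] (μ : Measure Ω) [IsProbabilityMeasure μ]
    (N B : ℕ) (hN : 0 < N) (hB : 0 < B)
    (s : Fin B → Ω → ℕ)
    (hmeas : ∀ b, Measurable (s b))
    (hrange : ∀ b ω, s b ω < N)
    (hunif : ∀ b, ∀ v, v < N → μ {ω | s b ω = v} = (N : ENNReal)⁻¹)
    (hindep : iIndepFun s μ) :
    1 - 1/5 ≤
      μ {ω | ∀ k k' : ℕ, k < N → k' < N → k ≠ k' →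
        ‖∑ b : Fin B,
            (starRingEnd ℂ) (Complex.exp (2 * Real.pi * Complex.I * k * (s b ω) / N)) *
              Complex.exp (2 * Real.pi * Complex.I * k' * (s b ω) / N)‖ / (B : ℝ) ≤
          2 * Real.sqrt (Real.log (5 * N) / B)} := by
  classical
  have hBR : (0:ℝ) < B := by exact_mod_cast hB
  set L : ℝ := Real.log (5 * N) with hLdef
  have hL0 : 0 ≤ L := Real.log_nonneg (by push_cast; nlinarith [hN.le, (by exact_mod_cast hN : (1:ℝ) ≤ N)])
  set c : ℝ := Real.cos (Real.pi / 12) with hcdef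
  have hc0 : 0 < c := aux_cos12_pos
  have hc2 : 9/10 ≤ c^2 := aux_cos12_sq
  set T : ℝ := 2 * Real.sqrt (B * L) with hTdef
  have hT0 : 0 ≤ T := by positivity
  set u : ℝ := T * c with hudef
  have hu0 : 0 ≤ u := by positivity
  set A : ℕ → ℕ → Set Ω := fun m j =>
    {ω | u ≤ ∑ b : Fin B, Real.cos (2 * Real.pi * m * (s b ω) / N - Real.pi * j / 6)} with hAdef
  have hAmeas : ∀ m j, MeasurableSet (A m j) := by
    intro m j
    apply measurableSet_le measurable_const
    exact Finset.measurable_sum Finset.univ fun b _ =>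
      aux_meas_comp (s b) (hmeas b)
        (fun v => Real.cos (2 * Real.pi * m * v / N - Real.pi * j / 6))
  have hAbound : ∀ m, 1 ≤ m → m < N → ∀ j : ℕ,
      μ (A m j) ≤ ENNReal.ofReal ((5 * N : ℝ) ^ (-(9/5 : ℝ))) := by
    intro m hm1 hmN j
    have hX := aux_hoeffding μ B hB
      (fun b ω => Real.cos (2 * Real.pi * m * (s b ω) / N - Real.pi * j / 6))
      (fun b => aux_meas_comp (s b) (hmeas b)
        (fun v => Real.cos (2 * Real.pi * m * v / N - Real.pi * j / 6)))
      (fun b ω => Real.abs_cos_le_one _)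
      (fun b => by
        have := aux_mean μ N hN (s b) (hmeas b) (hrange b) (hunif b)
          (fun v => Real.cos (2 * Real.pi * m * v / N - Real.pi * j / 6))
        rw [show (fun ω => Real.cos (2 * Real.pi * m * (s b ω) / N - Real.pi * j / 6))
            = fun ω => (fun v : ℕ => Real.cos (2 * Real.pi * m * v / N - Real.pi * j / 6)) (s b ω) from rfl]
        rw [this, aux_cos_sum_zero N m _ hm1 hmN, mul_zero])
      (hindep.comp (fun b (v : ℕ) => Real.cos (2 * Real.pi * m * v / N - Real.pi * j / 6))
        (fun b => measurable_from_top))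
      u hu0
    refine le_trans hX (ENNReal.ofReal_le_ofReal ?_)
    have hsq : u^2 = 4 * ((B:ℝ) * L) * c^2 := by
      rw [hudef, hTdef, mul_pow, mul_pow, Real.sq_sqrt (by positivity)]; ring
    rw [Real.rpow_def_of_pos (by positivity : (0:ℝ) < 5 * N), Real.exp_le_exp, hsq]
    have hEq : -(4 * ((B:ℝ) * L) * c^2)^1 / (2 * (B:ℝ)) = -(2 * c^2 * L) := by
      field_simp; ring
    have h1 : -(4 * ((B:ℝ) * L) * c^2) / (2 * (B:ℝ)) = -(2 * c^2 * L) := by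
      field_simp; ring
    rw [h1]
    nlinarith [hL0, hc2]
  set U : Set Ω := ⋃ m ∈ Finset.Ico 1 N, ⋃ j ∈ Finset.range 12, A m j with hUdef
  have hUmeas : MeasurableSet U :=
    Finset.measurableSet_biUnion _ fun m _ => Finset.measurableSet_biUnion _ fun j _ => hAmeas m j
  have hU5 : μ U ≤ 1/5 := by
    have hq := aux_numeric N hN
    calc μ U ≤ ∑ m ∈ Finset.Ico 1 N, μ (⋃ j ∈ Finset.range 12, A m j) :=
          measure_biUnion_finset_le _ _
      _ ≤ ∑ m ∈ Finset.Ico 1 N, ∑ j ∈ Finset.range 12, μ (A m j) :=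
          Finset.sum_le_sum fun m _ => measure_biUnion_finset_le _ _
      _ ≤ ∑ m ∈ Finset.Ico 1 N, ∑ j ∈ Finset.range 12,
            ENNReal.ofReal ((5 * N : ℝ) ^ (-(9/5 : ℝ))) := by
          refine Finset.sum_le_sum fun m hm => Finset.sum_le_sum fun j _ => ?_
          have hmem := Finset.mem_Ico.mp hm
          exact hAbound m hmem.1 hmem.2 j
      _ = ((N - 1) * 12 : ℕ) • ENNReal.ofReal ((5 * N : ℝ) ^ (-(9/5 : ℝ))) := by
          rw [Finset.sum_const, Finset.sum_const, Finset.card_range, Nat.card_Ico, smul_smul]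
      _ ≤ 1/5 := by
          rw [nsmul_eq_mul, ← ENNReal.ofReal_natCast, ← ENNReal.ofReal_mul (by positivity)]
          have hle : (((N-1) * 12 : ℕ) : ℝ) * (5 * N : ℝ) ^ (-(9/5 : ℝ)) ≤ 1/5 := by
            have : (((N-1) * 12 : ℕ) : ℝ) = 12 * ((N - 1 : ℕ) : ℝ) := by push_cast; ring
            rw [this]; exact hq
          calc ENNReal.ofReal ((((N-1) * 12 : ℕ) : ℝ) * (5 * N : ℝ) ^ (-(9/5 : ℝ)))
              ≤ ENNReal.ofReal (1/5) := ENNReal.ofReal_le_ofReal hle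
            _ = 1/5 := by
                rw [ENNReal.ofReal_div_of_pos (by norm_num)]
                norm_num
  have hsub : Uᶜ ⊆ {ω | ∀ k k' : ℕ, k < N → k' < N → k ≠ k' →
        ‖∑ b : Fin B,
            (starRingEnd ℂ) (Complex.exp (2 * Real.pi * Complex.I * k * (s b ω) / N)) *
              Complex.exp (2 * Real.pi * Complex.I * k' * (s b ω) / N)‖ / (B : ℝ) ≤
          2 * Real.sqrt (Real.log (5 * N) / B)} := by
    intro ω hω
    simp only [hUdef, Set.mem_compl_iff, Set.mem_iUnion, not_exists] at hω
    simp only [Set.mem_setOf_eq]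
    intro k k' hk hk' hne
    have hm1' : 1 ≤ (k' + N - k) % N := by
      have hne0 : (k' + N - k) % N ≠ 0 := by
        intro h0
        obtain ⟨q, hq⟩ := Nat.dvd_of_mod_eq_zero h0
        have hq2 : q < 2 := by
          by_contra hqc
          push_neg at hqc
          have : N * 2 ≤ N * q := Nat.mul_le_mul_left N hqc
          omega
        interval_cases q <;> omega
      omega
    have hmN' : (k' + N - k) % N < N := Nat.mod_lt _ hN
    obtain ⟨m, hmdef⟩ : ∃ m, (k' + N - k) % N = m := ⟨_, rfl⟩
    have hm1 : 1 ≤ m := hmdef ▸ hm1'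
    have hmN : m < N := hmdef ▸ hmN'
    have hrw : (∑ b : Fin B,
        (starRingEnd ℂ) (Complex.exp (2 * Real.pi * Complex.I * k * (s b ω) / N)) *
          Complex.exp (2 * Real.pi * Complex.I * k' * (s b ω) / N))
        = ∑ b : Fin B, Complex.exp (2 * Real.pi * Complex.I * (m:ℂ) * (s b ω) / N) :=
      Finset.sum_congr rfl fun b _ => aux_reduce N k k' m hk hk' hmdef (s b ω)
    rw [hrw]
    obtain ⟨S, hSdef⟩ : ∃ S : ℂ,
        S = ∑ b : Fin B, Complex.exp (2 * Real.pi * Complex.I * (m:ℂ) * (s b ω) / N) := ⟨_, rfl⟩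
    rw [← hSdef]
    by_contra hcon
    push_neg at hcon
    have hid : (B:ℝ) * (2 * Real.sqrt (L / B)) = T := by
      rw [hTdef, Real.sqrt_div hL0, Real.sqrt_mul hBR.le]
      rw [show (B:ℝ) * (2 * (Real.sqrt L / Real.sqrt B))
          = 2 * (Real.sqrt L * ((B:ℝ) / Real.sqrt B)) by ring, Real.div_sqrt]
      ring
    have hTS : T < ‖S‖ := by
      rw [← hid]
      calc (B:ℝ) * (2 * Real.sqrt (L / B)) < (B:ℝ) * (‖S‖ / B) :=
            mul_lt_mul_of_pos_left hcon hBR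
        _ = ‖S‖ := by field_simp
    obtain ⟨j, hj12, hjre⟩ := aux_cover S
    have hre : (Complex.exp (-(Real.pi * j / 6 : ℝ) * Complex.I) * S).re
        = ∑ b : Fin B, Real.cos (2 * Real.pi * m * (s b ω) / N - Real.pi * j / 6) := by
      rw [hSdef, Finset.mul_sum, Complex.re_sum]
      exact Finset.sum_congr rfl fun b _ => aux_re_term (Real.pi * j / 6) N m (s b ω)
    have hfin : u < ∑ b : Fin B, Real.cos (2 * Real.pi * m * (s b ω) / N - Real.pi * j / 6) := by
      calc u = T * c := hudef
        _ < ‖S‖ * c := mul_lt_mul_of_pos_right hTS hc0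
        _ = ‖S‖ * c := rfl
        _ ≤ (Complex.exp (-(Real.pi * j / 6 : ℝ) * Complex.I) * S).re := hjre
        _ = _ := hre
    exact hω m (Finset.mem_Ico.mpr ⟨hm1, hmN⟩) j (Finset.mem_range.mpr hj12) hfin.le
  calc (1:ENNReal) - 1/5 ≤ 1 - μ U := tsub_le_tsub_left hU5 1
    _ = μ Uᶜ := (prob_compl_eq_one_sub hUmeas).symm
    _ ≤ _ := measure_mono hsub
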